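/- Let u : ℤ → ℝ be nondecreasing and concave (u_{j+1} − u_j ≤ u_j − u_{j−1} for all j), and define the SIFE update u'_i = u_i − (τ/r²)(δ_{2r}[u]_i − 2δ_r[u]_i + u_i) with δ_r[u]_i = u_i + (r/h)(u_{i+1} − u_i) and δ_{2r}[u]_i = u_i + (2r/h)(u_{i+1} − u_i) + (r²/h²)(u_{i+2} − 2u_{i+1} + u_i). If 0 < r ≤ h and 0 < τ ≤ r², then u'_{i−1} ≤ u'_i for all i. -/
import Mathlib

/-- The SIFE update preserves monotonicity for nondecreasing concave signals:
with `u'_i = u_i − (τ/r²)(δ_{2r}[u]_i − 2δ_r[u]_i + u_i)`, if `0 < r ≤ h` and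
`0 < τ ≤ r²`, then `u'` is nondecreasing. -/
theorem sife_preserves_monotonicity (u u' : ℤ → ℝ)
    (hmono : ∀ j : ℤ, u j ≤ u (j + 1))
    (hconc : ∀ j : ℤ, u (j + 1) - u j ≤ u j - u (j - 1))
    (r h τ : ℝ) (hh : 0 < h) (hr : 0 < r) (hrh : r ≤ h)
    (hτ : 0 < τ) (hτr : τ ≤ r ^ 2)
    (hu' : ∀ i : ℤ, u' i = u i - (τ / r ^ 2) *
      ((u i + (2 * r / h) * (u (i + 1) - u i)
          + (r ^ 2 / h ^ 2) * (u (i + 2) - 2 * u (i + 1) + u i))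
        - 2 * (u i + (r / h) * (u (i + 1) - u i)) + u i)) :
    ∀ i : ℤ, u' (i - 1) ≤ u' i := by
  intro i
  rw [hu' i, hu' (i - 1)]
  have e1 : i - 1 + 1 = i := by ring
  have e2 : i - 1 + 2 = i + 1 := by ring
  rw [e1, e2]
  have h1 : u (i - 1) ≤ u i := by have := hmono (i - 1); rwa [e1] at this
  have h2 : u (i + 1) - u i ≤ u i - u (i - 1) := hconc i
  have h3 : u (i + 2) - u (i + 1) ≤ u (i + 1) - u i := by
    have := hconc (i + 1)
    have e3 : i + 1 + 1 = i + 2 := by ring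
    have e4 : i + 1 - 1 = i := by ring
    rwa [e3, e4] at this
  have hr2 : (0:ℝ) < r ^ 2 := by positivity
  have hh2 : (0:ℝ) < h ^ 2 := by positivity
  have hc : τ / r ^ 2 * (r ^ 2 / h ^ 2) = τ / h ^ 2 := by
    field_simp
  have key : u i - (τ / h ^ 2) * (u (i + 2) - 2 * u (i + 1) + u i)
      - (u (i - 1) - (τ / h ^ 2) * (u (i + 1) - 2 * u i + u (i - 1))) ≥ 0 := by
    set c := τ / h ^ 2 with hcdef
    have hc0 : 0 < c := by positivity
    have hc1 : c ≤ 1 := by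
      rw [div_le_one hh2]
      nlinarith
    have h0 : u i ≤ u (i + 1) := hmono i
    have hX : 0 ≤ (u i - u (i - 1)) - ((u (i + 2) - 2 * u (i + 1) + u i)
        - (u (i + 1) - 2 * u i + u (i - 1))) := by linarith
    nlinarith [mul_nonneg (sub_nonneg.2 hc1) (sub_nonneg.2 h1),
      mul_nonneg hc0.le hX]
  have expand : ∀ a b c2 : ℝ,
      a - τ / r ^ 2 * ((a + 2 * r / h * (b - a) + r ^ 2 / h ^ 2 * (c2 - 2 * b + a))
        - 2 * (a + r / h * (b - a)) + a)
      = a - (τ / h ^ 2) * (c2 - 2 * b + a) := by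
    intro a b c2
    have : (a + 2 * r / h * (b - a) + r ^ 2 / h ^ 2 * (c2 - 2 * b + a))
        - 2 * (a + r / h * (b - a)) + a = r ^ 2 / h ^ 2 * (c2 - 2 * b + a) := by ring
    rw [this, ← mul_assoc, hc]
  rw [expand, expand]
  linarith
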